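/- Let Z be a standard normal random variable and define g(θ, c) = E(|θ + Z| − θ ∣ |θ + Z| ≥ c) for θ ≥ 0 and c > 0. Then for fixed c > 0, g(θ, c) is a decreasing function of θ on [0, ∞), and g(θ, c) > 0 for all θ ≥ 0. -/

import Mathlib

open MeasureTheory ProbabilityTheory

/-- The standard normal distribution. -/
noncomputable def stdNormal : Measure ℝ := gaussianReal 0 1

/-- `g(θ, c) = E(|θ + Z| − θ ∣ |θ + Z| ≥ c)` for `Z` standard normal, where
`E(X ∣ A) = E(X·1_A)/P(A)`. -/
noncomputable def g (θ c : ℝ) : ℝ :=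
  (∫ x in {x : ℝ | c ≤ |θ + x|}, (|θ + x| - θ) ∂stdNormal)
    / (stdNormal {x : ℝ | c ≤ |θ + x|}).toReal

open Real Set Filter Topology
open scoped NNReal ENNReal

namespace GAux

noncomputable def phi (x : ℝ) : ℝ := (Real.sqrt (2 * Real.pi))⁻¹ * Real.exp (-x^2/2)

lemma phi_eq : phi = gaussianPDFReal 0 1 := by
  funext x
  simp [phi, gaussianPDFReal]

lemma phi_pos (x : ℝ) : 0 < phi x := by
  have h : 0 < Real.sqrt (2 * Real.pi) := Real.sqrt_pos.mpr (by positivity)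
  unfold phi
  positivity

lemma phi_neg (x : ℝ) : phi (-x) = phi x := by simp [phi]

lemma continuous_phi : Continuous phi :=
  continuous_const.mul (Real.continuous_exp.comp (by continuity))

lemma hasDerivAt_phi (x : ℝ) : HasDerivAt phi (-x * phi x) x := by
  have h1 : HasDerivAt (fun y : ℝ => -y^2/2) (-x) x := by
    have := ((hasDerivAt_pow 2 x).neg).div_const 2
    simpa [neg_div] using this.congr_deriv (by ring)
  have h2 := (h1.exp).const_mul ((Real.sqrt (2 * Real.pi))⁻¹)
  refine HasDerivAt.congr_deriv h2 ?_
  unfold phi; ring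

lemma integrable_phi : Integrable phi := phi_eq ▸ integrable_gaussianPDFReal 0 1

lemma integrable_mul_phi : Integrable (fun x => x * phi x) := by
  have h := (integrable_mul_exp_neg_mul_sq (by norm_num : (0:ℝ) < 1/2)).const_mul
    ((Real.sqrt (2 * Real.pi))⁻¹)
  refine h.congr (ae_of_all _ fun x => ?_)
  show (Real.sqrt (2 * Real.pi))⁻¹ * (x * Real.exp (-(1/2) * x^2)) = x * phi x
  unfold phi
  rw [show -(1/2 : ℝ) * x^2 = -x^2/2 by ring]
  ring

lemma tendsto_phi : Tendsto phi atTop (𝓝 0) := by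
  have h1 : Tendsto (fun x : ℝ => x^2/2) atTop atTop := by
    apply Tendsto.atTop_div_const (by norm_num)
    exact tendsto_pow_atTop (by norm_num)
  have h2 : Tendsto (fun x : ℝ => Real.exp (-(x^2/2))) atTop (𝓝 0) :=
    Real.tendsto_exp_neg_atTop_nhds_zero.comp h1
  have h3 := h2.const_mul ((Real.sqrt (2 * Real.pi))⁻¹)
  rw [show ((Real.sqrt (2 * Real.pi))⁻¹ * 0 : ℝ) = 0 by ring] at h3
  refine h3.congr fun x => ?_
  show (Real.sqrt (2 * Real.pi))⁻¹ * Real.exp (-(x^2/2)) = phi x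
  rw [phi, neg_div]

noncomputable def T (x : ℝ) : ℝ := ∫ t in Ioi x, phi t

lemma integral_mul_phi_Ioi (a : ℝ) : ∫ t in Ioi a, t * phi t = phi a := by
  have hderiv : ∀ x ∈ Ici a, HasDerivAt (fun t => -phi t) (x * phi x) x := by
    intro x _
    exact (hasDerivAt_phi x).neg.congr_deriv (by ring)
  have hint : IntegrableOn (fun t => t * phi t) (Ioi a) := integrable_mul_phi.integrableOn
  have hlim : Tendsto (fun t => -phi t) atTop (𝓝 0) := by
    simpa using tendsto_phi.neg
  have := integral_Ioi_of_hasDerivAt_of_tendsto' hderiv hint hlim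
  simpa using this

lemma T_split {a b : ℝ} (hab : a ≤ b) : T a = (∫ t in Ioc a b, phi t) + T b := by
  rw [T, T, ← setIntegral_union (Ioc_disjoint_Ioi le_rfl) measurableSet_Ioi
    integrable_phi.integrableOn integrable_phi.integrableOn, Ioc_union_Ioi_eq_Ioi hab]

lemma integral_Ioc_phi_pos {a b : ℝ} (hab : a < b) : 0 < ∫ t in Ioc a b, phi t := by
  rw [setIntegral_pos_iff_support_of_nonneg_ae
    (ae_of_all _ (fun x => (phi_pos x).le)) integrable_phi.integrableOn]
  have : Function.support phi = Set.univ := by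
    ext x; simp [Function.support, (phi_pos x).ne']
  rw [this, Set.univ_inter]
  simpa [hab]

lemma T_pos (x : ℝ) : 0 < T x := by
  have h := T_split (le_of_lt (lt_add_one x))
  have h2 := integral_Ioc_phi_pos (lt_add_one x)
  have h3 : 0 ≤ T (x+1) := setIntegral_nonneg measurableSet_Ioi (fun t _ => (phi_pos t).le)
  rw [h]; linarith

lemma T_strictAnti : StrictAnti T := by
  intro a b hab
  have := T_split hab.le
  have := integral_Ioc_phi_pos hab
  linarith

lemma mills (x : ℝ) : x * T x ≤ phi x := by
  rcases le_or_gt x 0 with hx | hx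
  · have : x * T x ≤ 0 := mul_nonpos_of_nonpos_of_nonneg hx (T_pos x).le
    linarith [phi_pos x]
  · have h1 : x * T x = ∫ t in Ioi x, x * phi t := by
      rw [T, MeasureTheory.integral_const_mul]
    rw [h1, ← integral_mul_phi_Ioi x]
    apply setIntegral_mono_on (integrable_phi.integrableOn.const_mul x)
      integrable_mul_phi.integrableOn measurableSet_Ioi
    intro t ht
    have : x ≤ t := le_of_lt ht
    nlinarith [phi_pos t]

lemma hasDerivAt_T (x : ℝ) : HasDerivAt T (-phi x) x := by
  have key : ∀ y : ℝ, T y = T 0 - ∫ t in (0:ℝ)..y, phi t := by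
    intro y
    rcases le_total 0 y with h | h
    · rw [intervalIntegral.integral_of_le h]
      have := T_split h
      linarith
    · rw [intervalIntegral.integral_symm, intervalIntegral.integral_of_le h]
      have := T_split h
      linarith
  have h2 : HasDerivAt (fun y => ∫ t in (0:ℝ)..y, phi t) (phi x) x :=
    intervalIntegral.integral_hasDerivAt_right integrable_phi.intervalIntegrable
      (continuous_phi.stronglyMeasurableAtFilter _ _) continuous_phi.continuousAt
  have h3 : HasDerivAt (fun y => T 0 - ∫ t in (0:ℝ)..y, phi t) (-phi x) x := by
    simpa using h2.const_sub (T 0)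
  have : T = fun y => T 0 - ∫ t in (0:ℝ)..y, phi t := funext key
  rw [this]
  exact h3

lemma stdNormal_set_toReal (S : Set ℝ) :
    (stdNormal S).toReal = ∫ x in S, phi x := by
  rw [stdNormal, gaussianReal_apply_eq_integral 0 one_ne_zero S,
    ENNReal.toReal_ofReal (integral_nonneg fun x => gaussianPDFReal_nonneg 0 1 x), phi_eq]

lemma stdNormal_setIntegral (f : ℝ → ℝ) {S : Set ℝ} (hS : MeasurableSet S) :
    ∫ x in S, f x ∂stdNormal = ∫ x in S, phi x * f x := by
  rw [stdNormal, gaussianReal_of_var_ne_zero 0 one_ne_zero]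
  have hpdf : gaussianPDF 0 1 =
      fun x => ((Real.toNNReal (gaussianPDFReal 0 1 x) : ℝ≥0) : ℝ≥0∞) := rfl
  rw [hpdf, MeasureTheory.restrict_withDensity hS,
    integral_withDensity_eq_integral_smul
      ((measurable_gaussianPDFReal 0 1).real_toNNReal) f]
  refine setIntegral_congr_fun hS fun x _ => ?_
  rw [NNReal.smul_def, Real.coe_toNNReal _ (gaussianPDFReal_nonneg 0 1 x), phi_eq]
  rfl

lemma set_eq (c θ : ℝ) : {x : ℝ | c ≤ |θ + x|} = Iic (-(c+θ)) ∪ Ici (c-θ) := by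
  ext x
  simp only [mem_setOf_eq, le_abs, mem_union, mem_Iic, mem_Ici]
  constructor
  · rintro (h | h)
    · right; linarith
    · left; linarith
  · rintro (h | h)
    · right; linarith
    · left; linarith

lemma disj (c θ : ℝ) (hc : 0 < c) : Disjoint (Iic (-(c+θ))) (Ici (c-θ)) := by
  apply Set.disjoint_left.mpr
  intro x hx hx'
  simp only [mem_Iic, mem_Ici] at hx hx'
  linarith

lemma denom_eq (c θ : ℝ) (hc : 0 < c) :
    (stdNormal {x : ℝ | c ≤ |θ + x|}).toReal = T (c-θ) + T (c+θ) := by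
  rw [stdNormal_set_toReal, set_eq,
    setIntegral_union (disj c θ hc) measurableSet_Ici
      integrable_phi.integrableOn integrable_phi.integrableOn]
  have h1 : ∫ x in Iic (-(c+θ)), phi x = T (c+θ) := by
    rw [← integral_comp_neg_Ioi]
    simp only [phi_neg]
    rfl
  have h2 : ∫ x in Ici (c-θ), phi x = T (c-θ) :=
    integral_Ici_eq_integral_Ioi
  rw [h1, h2]
  ring

lemma measurableSet_S (c θ : ℝ) : MeasurableSet {x : ℝ | c ≤ |θ + x|} := by
  rw [set_eq]
  exact measurableSet_Iic.union measurableSet_Ici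

lemma numer_eq (c θ : ℝ) (hc : 0 < c) :
    ∫ x in {x : ℝ | c ≤ |θ + x|}, (|θ + x| - θ) ∂stdNormal
      = phi (c-θ) + phi (c+θ) - 2*θ*T (c+θ) := by
  rw [stdNormal_setIntegral _ (measurableSet_S c θ), set_eq]
  have eq2 : EqOn (fun x => x * phi x) (fun x => phi x * (|θ + x| - θ)) (Ici (c-θ)) := by
    intro x hx
    simp only [mem_Ici] at hx
    have h1 : 0 < θ + x := by linarith
    show x * phi x = phi x * (|θ + x| - θ)
    rw [abs_of_pos h1]
    ring
  have eq1 : EqOn (fun x => -(x * phi x) - 2*θ*phi x) (fun x => phi x * (|θ + x| - θ))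
      (Iic (-(c+θ))) := by
    intro x hx
    simp only [mem_Iic] at hx
    have h1 : θ + x < 0 := by linarith
    show -(x * phi x) - 2*θ*phi x = phi x * (|θ + x| - θ)
    rw [abs_of_neg h1]
    ring
  have int1 : IntegrableOn (fun x => phi x * (|θ + x| - θ)) (Iic (-(c+θ))) :=
    ((integrable_mul_phi.neg.sub ((integrable_phi.const_mul (2*θ)).congr
      (ae_of_all _ fun x => by ring))).integrableOn).congr_fun eq1 measurableSet_Iic
  have int2 : IntegrableOn (fun x => phi x * (|θ + x| - θ)) (Ici (c-θ)) :=
    (integrable_mul_phi.integrableOn).congr_fun eq2 measurableSet_Ici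
  rw [setIntegral_union (disj c θ hc) measurableSet_Ici int1 int2]
  have I2 : ∫ x in Ici (c-θ), phi x * (|θ + x| - θ) = phi (c-θ) := by
    rw [← setIntegral_congr_fun measurableSet_Ici eq2, integral_Ici_eq_integral_Ioi,
      integral_mul_phi_Ioi]
  have I1 : ∫ x in Iic (-(c+θ)), phi x * (|θ + x| - θ) = phi (c+θ) - 2*θ*T (c+θ) := by
    rw [← setIntegral_congr_fun measurableSet_Iic eq1, ← integral_comp_neg_Ioi]
    have eq3 : EqOn (fun x : ℝ => -(-x * phi (-x)) - 2*θ*phi (-x))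
        (fun x => x * phi x - 2*θ*phi x) (Ioi (c+θ)) := by
      intro x _
      simp only [phi_neg]
      ring
    rw [setIntegral_congr_fun measurableSet_Ioi eq3,
      integral_sub integrable_mul_phi.integrableOn
        ((integrable_phi.const_mul (2*θ)).congr (ae_of_all _ fun x => by ring)).integrableOn,
      integral_mul_phi_Ioi, MeasureTheory.integral_const_mul]
    rfl
  rw [I1, I2]
  ring

noncomputable def Nf (c θ : ℝ) : ℝ := phi (c-θ) + phi (c+θ) - 2*θ*T (c+θ)
noncomputable def Df (c θ : ℝ) : ℝ := T (c-θ) + T (c+θ)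

lemma Df_pos (c θ : ℝ) : 0 < Df c θ := add_pos (T_pos _) (T_pos _)

lemma hasDerivAt_Nf (c θ : ℝ) :
    HasDerivAt (Nf c) ((c-θ)*(phi (c-θ) - phi (c+θ)) - 2*T (c+θ)) θ := by
  have hsub : HasDerivAt (fun θ : ℝ => c - θ) (-1) θ := by
    simpa using (hasDerivAt_id θ).const_sub c
  have hadd : HasDerivAt (fun θ : ℝ => c + θ) 1 θ := by
    simpa using (hasDerivAt_id θ).const_add c
  have hA : HasDerivAt (fun θ => phi (c-θ)) ((c-θ) * phi (c-θ)) θ := by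
    have := (hasDerivAt_phi (c-θ)).comp θ hsub
    exact this.congr_deriv (by ring)
  have hB : HasDerivAt (fun θ => phi (c+θ)) (-(c+θ) * phi (c+θ)) θ := by
    have := (hasDerivAt_phi (c+θ)).comp θ hadd
    exact this.congr_deriv (by ring)
  have hU : HasDerivAt (fun θ => T (c+θ)) (-phi (c+θ)) θ := by
    have := (hasDerivAt_T (c+θ)).comp θ hadd
    exact this.congr_deriv (by ring)
  have hlin : HasDerivAt (fun θ : ℝ => 2*θ) 2 θ := by
    simpa using (hasDerivAt_id θ).const_mul 2
  have hprod : HasDerivAt (fun θ => 2*θ*T (c+θ)) (2*T (c+θ) + 2*θ*(-phi (c+θ))) θ :=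
    hlin.mul hU
  have := (hA.add hB).sub hprod
  exact this.congr_deriv (by ring)

lemma hasDerivAt_Df (c θ : ℝ) :
    HasDerivAt (Df c) (phi (c-θ) - phi (c+θ)) θ := by
  have hsub : HasDerivAt (fun θ : ℝ => c - θ) (-1) θ := by
    simpa using (hasDerivAt_id θ).const_sub c
  have hadd : HasDerivAt (fun θ : ℝ => c + θ) 1 θ := by
    simpa using (hasDerivAt_id θ).const_add c
  have hS : HasDerivAt (fun θ => T (c-θ)) (phi (c-θ)) θ := by
    have := (hasDerivAt_T (c-θ)).comp θ hsub
    exact this.congr_deriv (by ring)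
  have hU : HasDerivAt (fun θ => T (c+θ)) (-phi (c+θ)) θ := by
    have := (hasDerivAt_T (c+θ)).comp θ hadd
    exact this.congr_deriv (by ring)
  have := hS.add hU
  exact this.congr_deriv (by ring)

lemma phi_anti {x y : ℝ} (h : |x| ≤ |y|) : phi y ≤ phi x := by
  have hx2 : x^2 ≤ y^2 := by
    rw [← sq_abs x, ← sq_abs y]
    exact pow_le_pow_left₀ (abs_nonneg x) h 2
  apply mul_le_mul_of_nonneg_left _ (by positivity)
  exact Real.exp_le_exp.mpr (by linarith)

lemma hasDerivAt_quot (c θ : ℝ) :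
    HasDerivAt (fun θ => Nf c θ / Df c θ)
      ((((c-θ)*(phi (c-θ) - phi (c+θ)) - 2*T (c+θ)) * Df c θ
        - Nf c θ * (phi (c-θ) - phi (c+θ))) / (Df c θ)^2) θ :=
  (hasDerivAt_Nf c θ).div (hasDerivAt_Df c θ) (Df_pos c θ).ne'

lemma Nf_pos (c θ : ℝ) (hc : 0 < c) (hθ : 0 ≤ θ) : 0 < Nf c θ := by
  have hU := T_pos (c+θ)
  have hmb := mills (c+θ)
  have hA := phi_pos (c-θ)
  have hB := phi_pos (c+θ)
  rcases le_or_gt θ c with h | h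
  · -- 2θ ≤ c+θ
    have h2 : 2*θ*T (c+θ) ≤ (c+θ)*T (c+θ) :=
      mul_le_mul_of_nonneg_right (by linarith) hU.le
    unfold Nf
    nlinarith
  · -- θ > c : |c-θ| = θ-c, use T(c+θ) < T(θ-c) and (θ-c)T(θ-c) ≤ phi(θ-c)
    have hTlt : T (c+θ) < T (θ-c) := T_strictAnti (by linarith)
    have hm2 := mills (θ-c)
    have hphi : phi (c-θ) = phi (θ-c) := by
      rw [show c-θ = -(θ-c) by ring, phi_neg]
    have hkey : (θ-c)*T (c+θ) < phi (c-θ) := by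
      rw [hphi]
      calc (θ-c)*T (c+θ) < (θ-c)*T (θ-c) :=
            mul_lt_mul_of_pos_left hTlt (by linarith)
        _ ≤ phi (θ-c) := hm2
    unfold Nf
    nlinarith

lemma deriv_expr_nonpos (c θ : ℝ) (hc : 0 < c) (hθ : 0 ≤ θ) :
    ((c-θ)*(phi (c-θ) - phi (c+θ)) - 2*T (c+θ)) * Df c θ
      - Nf c θ * (phi (c-θ) - phi (c+θ)) ≤ 0 := by
  have hb : (0:ℝ) < c + θ := by linarith
  have habs : |c-θ| ≤ |c+θ| := by
    rw [abs_of_pos hb]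
    exact abs_le.mpr ⟨by linarith, by linarith⟩
  have hΔ : phi (c+θ) ≤ phi (c-θ) := phi_anti habs
  have h1 : (c-θ) * T (c-θ) ≤ phi (c-θ) := mills _
  have h2 : (c+θ) * T (c+θ) ≤ phi (c+θ) := mills _
  have hS : 0 < T (c-θ) := T_pos _
  have hU : 0 < T (c+θ) := T_pos _
  unfold Nf Df
  nlinarith [mul_nonneg (sub_nonneg.mpr hΔ) (sub_nonneg.mpr h1),
    mul_nonneg (sub_nonneg.mpr hΔ) (sub_nonneg.mpr h2),
    mul_pos hS hU, mul_pos hU hU]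

lemma g_eq (c θ : ℝ) (hc : 0 < c) : g θ c = Nf c θ / Df c θ := by
  rw [g, numer_eq c θ hc, denom_eq c θ hc]
  rfl

end GAux

open GAux in
/-- For fixed `c > 0`, `g(θ, c)` is a decreasing function of `θ` on `[0, ∞)`,
and `g(θ, c) > 0` for all `θ ≥ 0`. -/
theorem g_antitone_in_theta_and_pos (c : ℝ) (hc : 0 < c) :
    AntitoneOn (fun θ => g θ c) (Set.Ici (0 : ℝ)) ∧
    (∀ θ : ℝ, 0 ≤ θ → 0 < g θ c) := by
  constructor
  · have hfun : (fun θ => g θ c) = fun θ => Nf c θ / Df c θ :=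
      funext fun θ => g_eq c θ hc
    rw [hfun]
    apply antitoneOn_of_deriv_nonpos (convex_Ici 0)
    · intro x _
      exact (hasDerivAt_quot c x).continuousAt.continuousWithinAt
    · intro x hx
      exact (hasDerivAt_quot c x).differentiableAt.differentiableWithinAt
    · intro x hx
      rw [interior_Ici] at hx
      rw [(hasDerivAt_quot c x).deriv]
      exact div_nonpos_of_nonpos_of_nonneg (deriv_expr_nonpos c x hc hx.le) (sq_nonneg _)
  · intro θ hθ
    rw [g_eq c θ hc]
    exact div_pos (Nf_pos c θ hc hθ) (Df_pos c θ)
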